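/- arXiv:1704.02381 — 2 statements merged into one kernel-verified Lean document; each statement's English description precedes it below -/
import Mathlib

section
/- Fix λ > 0 and let k ∈ {1, …, K_λ}. Then: (a) σ̂_k² ≤ σ̂_{k−1}² if and only if σ̂_k² ≤ σ̂_ℓ² for all 0 ≤ ℓ ≤ k−1; (b) σ̂_k² ≥ σ̂_{k−1}² if and only if σ̂_ℓ² ≥ σ̂_{k−1}² for all ℓ with k−1 < ℓ ≤ K_λ. -/
open scoped BigOperators NNReal ENNReal
open Classical MeasureTheory ProbabilityTheory

noncomputable section

/-- Squared Frobenius (Hilbert–Schmidt) norm of a real matrix. -/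
def frob2 {n m : ℕ} (M : Matrix (Fin n) (Fin m) ℝ) : ℝ :=
  ∑ i, ∑ j, (M i j) ^ 2

/-- `sval M k` is the `k`-th largest singular value of `M` (1-based indexing),
i.e. the square root of the `k`-th largest eigenvalue of `Mᴴ * M`; by convention
it is `0` for `k = 0` and for `k > m`. -/
def sval {n m : ℕ} (M : Matrix (Fin n) (Fin m) ℝ) (k : ℕ) : ℝ :=
  if h : 1 ≤ k ∧ k ≤ m then
    Real.sqrt ((show (M.transpose * M).IsHermitian by
      simpa [Matrix.conjTranspose_eq_transpose_of_trivial] using Matrix.isHermitian_conjTranspose_mul_self M).eigenvalues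
      (Tuple.sort (show (M.transpose * M).IsHermitian by
      simpa [Matrix.conjTranspose_eq_transpose_of_trivial] using Matrix.isHermitian_conjTranspose_mul_self M).eigenvalues ⟨m - k, by omega⟩))
  else 0

/-- A best rank-`k` approximation of `M` in Frobenius norm (rank-`k` truncated SVD),
with the convention that the rank-`0` truncation is `0`. -/
def trunc {n m : ℕ} (M : Matrix (Fin n) (Fin m) ℝ) (k : ℕ) :
    Matrix (Fin n) (Fin m) ℝ :=
  if k = 0 then 0
  else Classical.epsilon fun B : Matrix (Fin n) (Fin m) ℝ =>
    B.rank ≤ k ∧ ∀ C : Matrix (Fin n) (Fin m) ℝ, C.rank ≤ k → frob2 (M - B) ≤ frob2 (M - C)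

/-- `K_λ = ⌊(nm-1)/λ⌋ ∧ q ∧ m`. -/
def Kfun (n m q : ℕ) (lam : ℝ) : ℕ :=
  min (min (Nat.floor ((((n * m : ℕ) : ℝ) - 1) / lam)) q) m

/-- `σ̂_k² = ‖Y - (PY)_k‖² / (nm - λ k)`. -/
def sighat2 {n m : ℕ} (Y : Matrix (Fin n) (Fin m) ℝ)
    (P : Matrix (Fin n) (Fin n) ℝ) (lam : ℝ) (k : ℕ) : ℝ :=
  frob2 (Y - trunc (P * Y) k) / (((n * m : ℕ) : ℝ) - lam * k)

/-- The selected rank `k̂ = ∑_{k=1}^{K_λ} 1{d_k²(PY) ≥ λ σ̂_k²}`,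
which minimizes `σ̂_k²` over `{0, 1, …, K_λ}`. -/
def khat {n m : ℕ} (Y : Matrix (Fin n) (Fin m) ℝ)
    (P : Matrix (Fin n) (Fin n) ℝ) (q : ℕ) (lam : ℝ) : ℕ :=
  ∑ k ∈ Finset.Icc 1 (Kfun n m q lam),
    if lam * sighat2 Y P lam k ≤ (sval (P * Y) k) ^ 2 then 1 else 0


section EYDev
open Matrix

lemma frob2_eq_trace {n m : ℕ} (M : Matrix (Fin n) (Fin m) ℝ) :
    frob2 M = Matrix.trace (Mᴴ * M) := by
  unfold frob2 Matrix.trace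
  rw [Finset.sum_comm]
  congr 1; ext j
  simp [Matrix.mul_apply, Matrix.diag, Matrix.conjTranspose_apply, pow_two]

lemma frob2_nonneg {n m : ℕ} (M : Matrix (Fin n) (Fin m) ℝ) : 0 ≤ frob2 M :=
  Finset.sum_nonneg fun _ _ => Finset.sum_nonneg fun _ _ => sq_nonneg _

lemma frob2_eq_zero {n m : ℕ} {M : Matrix (Fin n) (Fin m) ℝ} (h : frob2 M = 0) : M = 0 := by
  ext i j
  have h1 : ∀ i ∈ Finset.univ, (0:ℝ) ≤ ∑ j, (M i j)^2 :=
    fun _ _ => Finset.sum_nonneg fun _ _ => sq_nonneg _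
  have := (Finset.sum_eq_zero_iff_of_nonneg h1).mp h i (Finset.mem_univ i)
  have := (Finset.sum_eq_zero_iff_of_nonneg (fun _ _ => sq_nonneg _)).mp this j (Finset.mem_univ j)
  simpa using pow_eq_zero_iff (n := 2) (by norm_num) |>.mp this

lemma conjT_eq_transpose {n m : ℕ} (M : Matrix (Fin n) (Fin m) ℝ) : Mᴴ = Mᵀ := by
  ext i j; simp [Matrix.conjTranspose_apply]

lemma frob2_add {n m : ℕ} (A B : Matrix (Fin n) (Fin m) ℝ) :
    frob2 (A + B) = frob2 A + frob2 B + 2 * Matrix.trace (Aᴴ * B) := by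
  have hsym : Matrix.trace (Bᴴ * A) = Matrix.trace (Aᴴ * B) := by
    rw [← Matrix.trace_transpose (Bᴴ * A), Matrix.transpose_mul, conjT_eq_transpose,
      Matrix.transpose_transpose, ← conjT_eq_transpose]
  rw [frob2_eq_trace, frob2_eq_trace, frob2_eq_trace, Matrix.conjTranspose_add]
  rw [Matrix.add_mul, Matrix.mul_add, Matrix.mul_add, Matrix.trace_add, Matrix.trace_add,
    Matrix.trace_add, hsym]
  ring

lemma proj_pythagoras {n m : ℕ} {P : Matrix (Fin n) (Fin n) ℝ}
    (hP2 : P * P = P) (hPt : Pᵀ = P) (A : Matrix (Fin n) (Fin m) ℝ) :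
    frob2 A = frob2 (P * A) + frob2 (A - P * A) := by
  have hPA : P * (A - P * A) = 0 := by
    rw [Matrix.mul_sub, ← Matrix.mul_assoc, hP2, sub_self]
  have cross : Matrix.trace ((P * A)ᴴ * (A - P * A)) = 0 := by
    rw [Matrix.conjTranspose_mul, conjT_eq_transpose P, hPt, Matrix.mul_assoc, hPA,
      Matrix.mul_zero, Matrix.trace_zero]
  have key := frob2_add (P * A) (A - P * A)
  rw [cross] at key
  have hA : P * A + (A - P * A) = A := by abel
  rw [hA] at key
  linarith

/-- `frob2 (A * W) = tr (Aᴴ A W Wᴴ)`. -/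
lemma frob2_mul_eq_trace {n m s : ℕ} (A : Matrix (Fin n) (Fin m) ℝ)
    (W : Matrix (Fin m) (Fin s) ℝ) :
    frob2 (A * W) = Matrix.trace (Aᴴ * A * (W * Wᴴ)) := by
  calc frob2 (A * W) = Matrix.trace ((A * W)ᴴ * (A * W)) := frob2_eq_trace _
    _ = Matrix.trace ((A * W) * ((A * W)ᴴ)) := Matrix.trace_mul_comm _ _
    _ = Matrix.trace (A * (W * Wᴴ) * Aᴴ) := by
        rw [Matrix.conjTranspose_mul]; rw [Matrix.mul_assoc, Matrix.mul_assoc, Matrix.mul_assoc]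
    _ = Matrix.trace (Aᴴ * A * (W * Wᴴ)) := by
        rw [Matrix.trace_mul_cycle, ← Matrix.mul_assoc]

lemma frob2_mul_split {n m s : ℕ} (A : Matrix (Fin n) (Fin m) ℝ)
    (V : Matrix (Fin m) (Fin s) ℝ) (hV : Vᴴ * V = 1) :
    frob2 A = frob2 (A * V) + frob2 (A * (1 - V * Vᴴ)) := by
  have hQ2 : (V * Vᴴ) * (V * Vᴴ) = V * Vᴴ := by
    rw [Matrix.mul_assoc, ← Matrix.mul_assoc Vᴴ, hV, Matrix.one_mul]
  have hqH : (1 - V * Vᴴ)ᴴ = 1 - V * Vᴴ := by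
    simp [Matrix.conjTranspose_sub, Matrix.conjTranspose_mul]
  have hW : (1 - V * Vᴴ) * (1 - V * Vᴴ)ᴴ = 1 - V * Vᴴ := by
    rw [hqH, Matrix.mul_sub, Matrix.sub_mul, Matrix.sub_mul, hQ2]
    simp
  have h1 : frob2 (A * V) = Matrix.trace (Aᴴ * A * (V * Vᴴ)) := frob2_mul_eq_trace A V
  have h2 : frob2 (A * (1 - V * Vᴴ)) = Matrix.trace (Aᴴ * A * (1 - V * Vᴴ)) := by
    rw [frob2_mul_eq_trace, hW]
  rw [h1, h2, ← Matrix.trace_add, ← Matrix.mul_add]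
  simp [frob2_eq_trace]

lemma frob2_mul_le {n m s : ℕ} (A : Matrix (Fin n) (Fin m) ℝ)
    (V : Matrix (Fin m) (Fin s) ℝ) (hV : Vᴴ * V = 1) :
    frob2 (A * V) ≤ frob2 A := by
  rw [frob2_mul_split A V hV]
  have := frob2_nonneg (A * (1 - V * Vᴴ))
  linarith


variable {n m : ℕ} (M : Matrix (Fin n) (Fin m) ℝ)

def evAsc : Fin m → ℝ :=
  (Matrix.isHermitian_conjTranspose_mul_self M).eigenvalues ∘
    Tuple.sort (Matrix.isHermitian_conjTranspose_mul_self M).eigenvalues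

/-- sum of the `m - k` smallest eigenvalues of `Mᴴ M` -/
def tailSum (k : ℕ) : ℝ :=
  ∑ i ∈ Finset.univ.filter (fun i : Fin m => (i : ℕ) < m - k), evAsc M i

lemma card_filter_lt {r : ℕ} (h : r ≤ m) :
    (Finset.univ.filter fun i : Fin m => (i : ℕ) < r).card = r := by
  rw [show (Finset.univ.filter fun i : Fin m => (i : ℕ) < r)
      = Finset.attachFin (Finset.range r) (fun x hx => lt_of_lt_of_le (Finset.mem_range.mp hx) h)
      from by ext i; simp [Finset.mem_attachFin]]
  rw [Finset.card_attachFin, Finset.card_range]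

lemma tailSum_sub (k : ℕ) (hk1 : 1 ≤ k) (hkm : k ≤ m) :
    tailSum M (k - 1) = evAsc M ⟨m - k, by omega⟩ + tailSum M k := by
  unfold tailSum
  have hins : (Finset.univ.filter fun i : Fin m => (i : ℕ) < m - (k-1))
      = insert (⟨m - k, by omega⟩ : Fin m)
        (Finset.univ.filter fun i : Fin m => (i : ℕ) < m - k) := by
    ext i
    simp only [Finset.mem_filter, Finset.mem_univ, true_and, Finset.mem_insert, Fin.ext_iff]
    omega
  rw [hins, Finset.sum_insert (by simp)]

lemma tailSum_zero : tailSum M 0 = Matrix.trace (Mᴴ * M) := by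
  unfold tailSum
  have h1 : (Finset.univ.filter fun i : Fin m => (i : ℕ) < m - 0) = Finset.univ := by
    ext i; simp [i.isLt]
  rw [h1]
  unfold evAsc
  simp only [Function.comp_apply]
  rw [Equiv.sum_comp (Tuple.sort (Matrix.isHermitian_conjTranspose_mul_self M).eigenvalues)
    ((Matrix.isHermitian_conjTranspose_mul_self M).eigenvalues)]
  set hS := Matrix.isHermitian_conjTranspose_mul_self M
  set U : Matrix (Fin m) (Fin m) ℝ := (hS.eigenvectorUnitary : Matrix (Fin m) (Fin m) ℝ) with hU
  have hspec : Mᴴ * M = U * Matrix.diagonal hS.eigenvalues * star U := by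
    have h := hS.spectral_theorem
    exact h.trans rfl
  conv_rhs => rw [hspec, Matrix.trace_mul_cycle]
  rw [show star U * U = 1 from (Matrix.mem_unitaryGroup_iff').mp hS.eigenvectorUnitary.2]
  rw [Matrix.one_mul, Matrix.trace_diagonal]

lemma evAsc_monotone : Monotone (evAsc M) := Tuple.monotone_sort _

lemma evAsc_nonneg (i : Fin m) : 0 ≤ evAsc M i :=
  (Matrix.posSemidef_conjTranspose_mul_self M).eigenvalues_nonneg _

lemma tailSum_sub' (k : ℕ) (hk1 : 1 ≤ k) (hkm : k ≤ m) (h : m - k < m) :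
    tailSum M (k - 1) = evAsc M ⟨m - k, h⟩ + tailSum M k := tailSum_sub M k hk1 hkm

lemma ey_exists (k : ℕ) (hkm : k ≤ m) :
    ∃ B : Matrix (Fin n) (Fin m) ℝ, B.rank ≤ k ∧ frob2 (M - B) = tailSum M k := by
  set hS := Matrix.isHermitian_conjTranspose_mul_self M with hhS
  set U : Matrix (Fin m) (Fin m) ℝ := (hS.eigenvectorUnitary : Matrix (Fin m) (Fin m) ℝ) with hU
  set ev : Fin m → ℝ := hS.eigenvalues with hev
  set σ : Equiv.Perm (Fin m) := Tuple.sort ev with hσ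
  have hUU : U * star U = 1 := (Matrix.mem_unitaryGroup_iff).mp hS.eigenvectorUnitary.2
  have hsU : star U * U = 1 := (Matrix.mem_unitaryGroup_iff').mp hS.eigenvectorUnitary.2
  have hspec : Mᴴ * M = U * Matrix.diagonal ev * star U := by
    have h := hS.spectral_theorem
    exact h.trans rfl
  set g : Fin m → ℝ := fun j => if ((σ.symm j : Fin m) : ℕ) < m - k then 1 else 0 with hg
  set W : Matrix (Fin m) (Fin m) ℝ := U * (Matrix.diagonal g * star U) with hW
  set B : Matrix (Fin n) (Fin m) ℝ := M * (1 - W) with hB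
  have cancel : ∀ X : Matrix (Fin m) (Fin m) ℝ, star U * (U * X) = X := fun X => by
    rw [← Matrix.mul_assoc, hsU, Matrix.one_mul]
  have hgg : (fun j => g j * g j) = g := by
    funext j; by_cases h : ((σ.symm j : Fin m) : ℕ) < m - k <;> simp [hg, h]
  refine ⟨B, ?_, ?_⟩
  · -- rank bound
    have h1 : 1 - W = U * (Matrix.diagonal (fun j => 1 - g j) * star U) := by
      have : Matrix.diagonal (fun j => 1 - g j) = 1 - Matrix.diagonal g := by
        rw [← Matrix.diagonal_one, ← Matrix.diagonal_sub]
      rw [this, Matrix.sub_mul, Matrix.mul_sub, Matrix.one_mul, ← Matrix.mul_assoc, hUU, hW,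
        Matrix.mul_assoc]
    have h2 : B.rank ≤ (Matrix.diagonal (fun j => 1 - g j)).rank := by
      calc B.rank ≤ (1 - W).rank := Matrix.rank_mul_le_right _ _
        _ ≤ (Matrix.diagonal (fun j => 1 - g j) * star U).rank := by
            rw [h1]; exact Matrix.rank_mul_le_right _ _
        _ ≤ (Matrix.diagonal (fun j => 1 - g j)).rank := Matrix.rank_mul_le_left _ _
    refine h2.trans ?_
    rw [Matrix.rank_diagonal]
    have hiff : ∀ j, (1 - g j ≠ 0) ↔ (m - k ≤ ((σ.symm j : Fin m) : ℕ)) := by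
      intro j; by_cases h : ((σ.symm j : Fin m) : ℕ) < m - k <;> simp [hg, h] <;> omega
    have e1 : {j // 1 - g j ≠ 0} ≃ {i : Fin m // m - k ≤ (i : ℕ)} :=
      (Equiv.subtypeEquiv (σ.symm) (fun j => by rw [hiff j]))
    rw [Fintype.card_congr e1, Fintype.card_subtype]
    have : (Finset.univ.filter fun i : Fin m => m - k ≤ (i : ℕ))
        = Finset.univ \ (Finset.univ.filter fun i : Fin m => (i : ℕ) < m - k) := by
      rw [← Finset.filter_not]; congr 1; funext i; simp [not_lt]
    rw [this, Finset.card_sdiff_of_subset (Finset.filter_subset _ _), Finset.card_univ, Fintype.card_fin,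
      card_filter_lt (Nat.sub_le m k)]
    omega
  · -- frobenius norm value
    have hMB : M - B = M * W := by
      rw [hB, Matrix.mul_sub, Matrix.mul_one]; abel
    have hWH : Wᴴ = W := by
      rw [hW, Matrix.conjTranspose_mul, Matrix.conjTranspose_mul, Matrix.star_eq_conjTranspose,
        Matrix.conjTranspose_conjTranspose, Matrix.diagonal_conjTranspose]
      have : star g = g := by funext j; simp
      rw [this, ← Matrix.mul_assoc]
    have hWW : W * W = W := by
      rw [hW]; simp only [Matrix.mul_assoc]
      rw [cancel, ← Matrix.mul_assoc (Matrix.diagonal g), Matrix.diagonal_mul_diagonal, hgg]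
    rw [hMB, frob2_mul_eq_trace, hWH, hWW, hspec]
    have key : U * Matrix.diagonal ev * star U * W
        = U * (Matrix.diagonal (fun j => ev j * g j) * star U) := by
      rw [hW, Matrix.mul_assoc (U * Matrix.diagonal ev) (star U) _, cancel,
        Matrix.mul_assoc U (Matrix.diagonal ev) _, ← Matrix.mul_assoc (Matrix.diagonal ev),
        Matrix.diagonal_mul_diagonal]
    rw [key, Matrix.trace_mul_comm, Matrix.mul_assoc, hsU, Matrix.mul_one, Matrix.trace_diagonal]
    -- now : ∑ j, ev j * g j = tailSum M k
    rw [show (∑ j, ev j * g j) = ∑ i, ev (σ i) * g (σ i) from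
      (Equiv.sum_comp σ (fun j => ev j * g j)).symm]
    unfold tailSum
    rw [Finset.sum_filter]
    congr 1; funext i
    rw [hg]
    simp only [Equiv.symm_apply_apply]
    by_cases h : (i : ℕ) < m - k <;> simp [h, evAsc, hσ, hev, hhS]

lemma exists_ker_cols {n m : ℕ} (C : Matrix (Fin n) (Fin m) ℝ) {k : ℕ} (hC : C.rank ≤ k)
    (hkm : k ≤ m) :
    ∃ V : Matrix (Fin m) (Fin (m - k)) ℝ, Vᴴ * V = 1 ∧ C * V = 0 := by
  set e : EuclideanSpace ℝ (Fin m) ≃ₗ[ℝ] (Fin m → ℝ) :=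
    WithLp.linearEquiv 2 ℝ (Fin m → ℝ) with he
  set f : EuclideanSpace ℝ (Fin m) →ₗ[ℝ] (Fin n → ℝ) :=
    C.mulVecLin.comp e.toLinearMap with hf
  have hrange : LinearMap.range f = LinearMap.range C.mulVecLin := by
    rw [hf, LinearMap.range_comp, LinearEquiv.range, Submodule.map_top]
  have hdim : m - k ≤ Module.finrank ℝ (LinearMap.ker f) := by
    have h1 := LinearMap.finrank_range_add_finrank_ker f
    rw [finrank_euclideanSpace_fin, hrange] at h1
    have : (C.rank : ℕ) = Module.finrank ℝ (LinearMap.range C.mulVecLin) := rfl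
    omega
  set K' := LinearMap.ker f with hK'
  set b := stdOrthonormalBasis ℝ K' with hb
  set v : Fin (m - k) → EuclideanSpace ℝ (Fin m) :=
    fun i => ((b (Fin.castLE hdim i) : K') : EuclideanSpace ℝ (Fin m)) with hv
  refine ⟨Matrix.of fun t i => v i t, ?_, ?_⟩
  · ext i j
    have horth := b.orthonormal
    have h := orthonormal_iff_ite.mp horth (Fin.castLE hdim i) (Fin.castLE hdim j)
    have hinner : (inner ℝ (b (Fin.castLE hdim i)) (b (Fin.castLE hdim j)) : ℝ)
        = ∑ t, v i t * v j t := by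
      rw [Submodule.coe_inner]
      rw [PiLp.inner_apply]
      simp [RCLike.inner_apply, hv]
      exact Finset.sum_congr rfl fun _ _ => mul_comm _ _
    rw [Matrix.mul_apply, Matrix.one_apply]
    simp only [Matrix.conjTranspose_apply, Matrix.of_apply, star_trivial]
    rw [← hinner, h]
    have : (Fin.castLE hdim i = Fin.castLE hdim j) ↔ i = j := by
      constructor
      · intro hh; exact Fin.castLE_injective hdim hh
      · intro hh; rw [hh]
    simp [this]
  · ext a i
    have hmem : v i ∈ K' := (b (Fin.castLE hdim i)).2
    have : C.mulVec (e (v i)) = 0 := hmem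
    have happ : (C.mulVec (e (v i))) a = 0 := by rw [this]; rfl
    rw [Matrix.mul_apply]
    simpa [Matrix.mulVec, dotProduct, he] using happ

lemma rearrange {m s : ℕ} (μ c : Fin m → ℝ) (hmono : Monotone μ) (hμ0 : ∀ i, 0 ≤ μ i)
    (hc0 : ∀ i, 0 ≤ c i) (hc1 : ∀ i, c i ≤ 1) (hsum : ∑ i, c i = (s : ℝ)) (hs : s ≤ m) :
    ∑ i ∈ Finset.univ.filter (fun i : Fin m => (i : ℕ) < s), μ i ≤ ∑ i, μ i * c i := by
  rcases Nat.eq_zero_or_pos s with hs0 | hs1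
  · subst hs0
    have h1 : (Finset.univ.filter fun i : Fin m => (i : ℕ) < 0) = ∅ := by
      ext i; simp
    rw [h1, Finset.sum_empty]
    exact Finset.sum_nonneg fun i _ => mul_nonneg (hμ0 i) (hc0 i)
  · have hsm : s - 1 < m := by omega
    set θ : ℝ := μ ⟨s - 1, hsm⟩ with hθ
    set T := Finset.univ.filter (fun i : Fin m => (i : ℕ) < s) with hT
    have hTcard : T.card = s := card_filter_lt hs
    have hsplitμ : ∑ i, μ i * c i
        = ∑ i ∈ T, μ i * c i + ∑ i ∈ Finset.univ.filter (fun i : Fin m => ¬((i : ℕ) < s)), μ i * c i :=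
      (Finset.sum_filter_add_sum_filter_not _ _ _).symm
    have hsplitc : ∑ i, c i
        = ∑ i ∈ T, c i + ∑ i ∈ Finset.univ.filter (fun i : Fin m => ¬((i : ℕ) < s)), c i :=
      (Finset.sum_filter_add_sum_filter_not _ _ _).symm
    have h1 : ∑ i ∈ T, (μ i + θ * (c i - 1)) ≤ ∑ i ∈ T, μ i * c i := by
      refine Finset.sum_le_sum fun i hi => ?_
      have hi' : (i : ℕ) < s := by simpa [hT] using hi
      have hμθ : μ i ≤ θ := hmono (show i ≤ (⟨s - 1, hsm⟩ : Fin m) by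
        rw [Fin.le_def]; simp; omega)
      nlinarith [hc1 i]
    have h2 : ∑ i ∈ Finset.univ.filter (fun i : Fin m => ¬((i : ℕ) < s)), θ * c i
        ≤ ∑ i ∈ Finset.univ.filter (fun i : Fin m => ¬((i : ℕ) < s)), μ i * c i := by
      refine Finset.sum_le_sum fun i hi => ?_
      have hi' : ¬((i : ℕ) < s) := by simpa using hi
      have hθμ : θ ≤ μ i := hmono (show (⟨s - 1, hsm⟩ : Fin m) ≤ i by
        rw [Fin.le_def]; simp; omega)
      nlinarith [hc0 i]
    have e1 : ∑ i ∈ T, (μ i + θ * (c i - 1)) = ∑ i ∈ T, μ i + θ * ((∑ i ∈ T, c i) - s) := by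
      rw [Finset.sum_add_distrib, ← Finset.mul_sum, Finset.sum_sub_distrib, Finset.sum_const,
        hTcard, nsmul_eq_mul, mul_one]
    have e2 : ∑ i ∈ Finset.univ.filter (fun i : Fin m => ¬((i : ℕ) < s)), θ * c i
        = θ * ∑ i ∈ Finset.univ.filter (fun i : Fin m => ¬((i : ℕ) < s)), c i :=
      (Finset.mul_sum _ _ _).symm
    rw [e1] at h1
    rw [e2] at h2
    rw [hsplitc] at hsum
    rw [hsplitμ]
    have e3 : θ * ((∑ i ∈ T, c i) - ↑s)
        + θ * ∑ i ∈ Finset.univ.filter (fun i : Fin m => ¬((i : ℕ) < s)), c i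
        = θ * (((∑ i ∈ T, c i) + ∑ i ∈ Finset.univ.filter (fun i : Fin m => ¬((i : ℕ) < s)), c i)
            - ↑s) := by ring
    rw [hsum, sub_self, mul_zero] at e3
    linarith [h1, h2, e3]

lemma ey_lower (k : ℕ) (hkm : k ≤ m) (C : Matrix (Fin n) (Fin m) ℝ) (hC : C.rank ≤ k) :
    tailSum M k ≤ frob2 (M - C) := by
  obtain ⟨V, hVV, hCV⟩ := exists_ker_cols C hC hkm
  have h0 : (M - C) * V = M * V := by rw [Matrix.sub_mul, hCV, sub_zero]
  have h1 : frob2 (M * V) ≤ frob2 (M - C) := by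
    have := frob2_mul_le (M - C) V hVV
    rwa [h0] at this
  refine le_trans ?_ h1
  set hS := Matrix.isHermitian_conjTranspose_mul_self M with hhS
  set U : Matrix (Fin m) (Fin m) ℝ := (hS.eigenvectorUnitary : Matrix (Fin m) (Fin m) ℝ) with hU
  set ev : Fin m → ℝ := hS.eigenvalues with hev
  set σ : Equiv.Perm (Fin m) := Tuple.sort ev with hσ
  have hUU : U * star U = 1 := (Matrix.mem_unitaryGroup_iff).mp hS.eigenvectorUnitary.2
  have hsU : star U * U = 1 := (Matrix.mem_unitaryGroup_iff').mp hS.eigenvectorUnitary.2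
  have hspec : Mᴴ * M = U * Matrix.diagonal ev * star U := by
    have h := hS.spectral_theorem
    exact h.trans rfl
  have cancel : ∀ {s : ℕ} (X : Matrix (Fin m) (Fin s) ℝ), star U * (U * X) = X := fun X => by
    rw [← Matrix.mul_assoc, hsU, Matrix.one_mul]
  set G : Matrix (Fin m) (Fin (m - k)) ℝ := star U * V with hG
  have hVUG : V = U * G := by rw [hG, ← Matrix.mul_assoc, hUU, Matrix.one_mul]
  have hGH : Gᴴ = Vᴴ * U := by
    rw [hG, Matrix.conjTranspose_mul, Matrix.star_eq_conjTranspose,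
      Matrix.conjTranspose_conjTranspose]
  have hGG : Gᴴ * G = 1 := by
    rw [hGH, hG, Matrix.mul_assoc, ← Matrix.mul_assoc U, hUU, Matrix.one_mul, hVV]
  have htr : frob2 (M * V) = Matrix.trace (Matrix.diagonal ev * (G * Gᴴ)) := by
    rw [frob2_mul_eq_trace, hspec]
    have hVH : Vᴴ = Gᴴ * star U := by
      rw [hVUG, Matrix.conjTranspose_mul, Matrix.star_eq_conjTranspose]
    rw [hVH]
    conv_lhs => rw [hVUG]
    simp only [Matrix.mul_assoc]
    rw [cancel, Matrix.trace_mul_comm]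
    simp only [Matrix.mul_assoc]
    rw [show star U * U = 1 from hsU, Matrix.mul_one]
  set c : Fin m → ℝ := fun j => (G * Gᴴ) j j with hc
  have htr2 : Matrix.trace (Matrix.diagonal ev * (G * Gᴴ)) = ∑ j, ev j * c j := by
    simp [Matrix.trace, Matrix.diag, Matrix.diagonal_mul, hc]
  have hcsq : ∀ j, c j = ∑ i, (G j i) ^ 2 := by
    intro j
    rw [hc]
    simp [Matrix.mul_apply, Matrix.conjTranspose_apply, pow_two]
  have hc0 : ∀ j, 0 ≤ c j := fun j => by
    rw [hcsq]; exact Finset.sum_nonneg fun _ _ => sq_nonneg _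
  have hc1 : ∀ j, c j ≤ 1 := by
    intro j
    set Q : Matrix (Fin m) (Fin m) ℝ := G * Gᴴ with hQ
    have hQ2 : Q * Q = Q := by
      rw [hQ, Matrix.mul_assoc, ← Matrix.mul_assoc Gᴴ, hGG, Matrix.one_mul]
    have hQH : Qᴴ = Q := by
      rw [hQ, Matrix.conjTranspose_mul, Matrix.conjTranspose_conjTranspose]
    have hsymm : ∀ a b, Q a b = Q b a := by
      intro a b
      have := congrFun (congrFun hQH a) b
      simpa [Matrix.conjTranspose_apply] using this.symm
    have hdiag : c j = ∑ l, (Q j l) ^ 2 := by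
      have h := congrFun (congrFun hQ2 j) j
      have : (Q * Q) j j = ∑ l, (Q j l) ^ 2 := by
        rw [Matrix.mul_apply]
        congr 1; funext l
        rw [pow_two, hsymm l j]
      rw [← this, h]
    have hle : (Q j j) ^ 2 ≤ ∑ l, (Q j l) ^ 2 :=
      Finset.single_le_sum (f := fun l => (Q j l) ^ 2) (fun _ _ => sq_nonneg _)
        (Finset.mem_univ j)
    have hcj : c j = Q j j := rfl
    nlinarith [hc0 j]
  have hcsum : ∑ j, c j = ((m - k : ℕ) : ℝ) := by
    have h1 : ∑ j, c j = Matrix.trace (G * Gᴴ) := by simp [Matrix.trace, Matrix.diag, hc]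
    rw [h1, Matrix.trace_mul_comm, hGG, Matrix.trace_one]
    simp
  rw [htr, htr2]
  rw [show (∑ j, ev j * c j) = ∑ i, ev (σ i) * c (σ i) from
    (Equiv.sum_comp σ (fun j => ev j * c j)).symm]
  have hsum' : ∑ i, c (σ i) = ((m - k : ℕ) : ℝ) := by
    rw [Equiv.sum_comp σ c]; exact hcsum
  have := rearrange (evAsc M) (fun i => c (σ i)) (evAsc_monotone M) (evAsc_nonneg M)
    (fun i => hc0 _) (fun i => hc1 _) hsum' (Nat.sub_le m k)
  unfold tailSum
  exact this

lemma tailSum_of_ge {k : ℕ} (hk : m ≤ k) : tailSum M k = 0 := by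
  unfold tailSum
  have h : (Finset.univ.filter fun i : Fin m => (i : ℕ) < m - k) = ∅ := by
    ext i; simp; omega
  rw [h, Finset.sum_empty]

lemma ey_exists' (k : ℕ) :
    ∃ B : Matrix (Fin n) (Fin m) ℝ, B.rank ≤ k ∧ frob2 (M - B) = tailSum M k := by
  rcases le_or_gt k m with h | h
  · exact ey_exists M k h
  · refine ⟨M, (Matrix.rank_le_width M).trans (by omega), ?_⟩
    rw [tailSum_of_ge M (by omega), sub_self]
    simp [frob2]

lemma ey_lower' (k : ℕ) (C : Matrix (Fin n) (Fin m) ℝ) (hC : C.rank ≤ k) :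
    tailSum M k ≤ frob2 (M - C) := by
  rcases le_or_gt k m with h | h
  · exact ey_lower M k h C hC
  · rw [tailSum_of_ge M (by omega)]
    exact frob2_nonneg _

lemma trunc_spec (k : ℕ) (hk : 1 ≤ k) :
    (trunc M k).rank ≤ k ∧ frob2 (M - trunc M k) = tailSum M k ∧
      ∀ C : Matrix (Fin n) (Fin m) ℝ, C.rank ≤ k → frob2 (M - trunc M k) ≤ frob2 (M - C) := by
  obtain ⟨B, hB1, hB2⟩ := ey_exists' M k
  have hex : ∃ B' : Matrix (Fin n) (Fin m) ℝ, B'.rank ≤ k ∧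
      ∀ C : Matrix (Fin n) (Fin m) ℝ, C.rank ≤ k → frob2 (M - B') ≤ frob2 (M - C) :=
    ⟨B, hB1, fun C hC => by rw [hB2]; exact ey_lower' M k C hC⟩
  have hspec := Classical.epsilon_spec hex
  have htr : trunc M k = Classical.epsilon fun B' : Matrix (Fin n) (Fin m) ℝ =>
      B'.rank ≤ k ∧ ∀ C : Matrix (Fin n) (Fin m) ℝ, C.rank ≤ k →
        frob2 (M - B') ≤ frob2 (M - C) := by
    unfold trunc; rw [if_neg (by omega)]
  rw [htr]
  refine ⟨hspec.1, ?_, hspec.2⟩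
  refine le_antisymm ?_ (ey_lower' M k _ hspec.1)
  rw [← hB2]
  exact hspec.2 B hB1

/-- The central formula: `‖Y - (PY)ₖ‖² = ‖Y - PY‖² + tailSum (PY) k`. -/
lemma F_eq {P : Matrix (Fin n) (Fin n) ℝ} (hP2 : P * P = P) (hPt : Pᵀ = P)
    (Y : Matrix (Fin n) (Fin m) ℝ) (k : ℕ) :
    frob2 (Y - trunc (P * Y) k) = frob2 (Y - P * Y) + tailSum (P * Y) k := by
  set M := P * Y with hM
  have hPM : P * M = M := by rw [hM, ← Matrix.mul_assoc, hP2]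
  rcases Nat.eq_zero_or_pos k with rfl | hk
  · have h0 : trunc M 0 = 0 := by unfold trunc; rw [if_pos rfl]
    rw [h0, sub_zero, tailSum_zero, ← frob2_eq_trace]
    have := proj_pythagoras hP2 hPt Y
    rw [← hM] at this
    linarith
  · obtain ⟨hrank, hval, hmin⟩ := trunc_spec M k hk
    set B := trunc M k with hB
    -- B is in the range of P
    have h1 : (P * B).rank ≤ k := (Matrix.rank_mul_le_right P B).trans hrank
    have h3 : M - P * B = P * (M - B) := by rw [Matrix.mul_sub, hPM]
    have h2 : frob2 (M - B) ≤ frob2 (P * (M - B)) := by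
      rw [← h3]; exact hmin _ h1
    have h4 := proj_pythagoras hP2 hPt (M - B)
    have h5 : frob2 ((M - B) - P * (M - B)) = 0 := by
      have := frob2_nonneg ((M - B) - P * (M - B))
      linarith
    have h6 : M - B = P * (M - B) := by
      have := frob2_eq_zero h5
      have h7 : (M - B) - P * (M - B) = 0 := this
      linear_combination (norm := abel) h7
    -- orthogonal decomposition
    have hcross : Matrix.trace ((Y - M)ᴴ * (M - B)) = 0 := by
      rw [h6, ← Matrix.mul_assoc]
      have h8 : (Y - M)ᴴ * P = (P * (Y - M))ᴴ := by
        rw [Matrix.conjTranspose_mul, conjT_eq_transpose P, hPt]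
      have h9 : P * (Y - M) = 0 := by
        rw [Matrix.mul_sub, hPM, hM]
        exact sub_self _
      rw [h8, h9]
      simp
    have hYB : Y - B = (Y - M) + (M - B) := by abel
    rw [hYB, frob2_add, hcross, hval]
    ring

private lemma key_down (c tk tk1 gk lam D : ℝ)
    (h : (c + tk) * (gk + lam) ≤ (c + tk1) * gk) (heq : tk1 = D + tk) :
    lam * (c + tk) ≤ D * gk := by subst heq; nlinarith [h]

private lemma key_up (c tk tk1 gk lam D : ℝ)
    (h : (c + tk1) * gk ≤ (c + tk) * (gk + lam)) (heq : tk1 = D + tk) :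
    D * (gk + lam) ≤ lam * (c + tk1) := by subst heq; nlinarith [h]

private lemma step_down (c tk tl tl1 gk gl lam D Dl : ℝ)
    (hprev : (c + tk) * gl ≤ (c + tl) * gk)
    (hkey : lam * (c + tk) ≤ D * gk)
    (hmono : D * gk ≤ Dl * gk)
    (heq : tl1 = Dl + tl) :
    (c + tk) * (gl + lam) ≤ (c + tl1) * gk := by subst heq; nlinarith [hprev, hkey, hmono]

private lemma step_up (c tk1 tl tl1 gk1 gl lam Dl : ℝ)
    (hprev : (c + tk1) * gl ≤ (c + tl) * gk1)
    (hkey : Dl * gk1 ≤ lam * (c + tk1))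
    (heq : tl = Dl + tl1) :
    (c + tk1) * (gl - lam) ≤ (c + tl1) * gk1 := by subst heq; nlinarith [hprev, hkey]


end EYDev

theorem statement_1
    {n m p q : ℕ}
    (X : Matrix (Fin n) (Fin p) ℝ) (A : Matrix (Fin p) (Fin m) ℝ)
    (E Y : Matrix (Fin n) (Fin m) ℝ)
    (P : Matrix (Fin n) (Fin n) ℝ)
    (hY : Y = X * A + E)
    (hP2 : P * P = P) (hPt : P.transpose = P) (hPX : P * X = X)
    (hq : X.rank = q) (hPq : P.rank = q)
    (lam : ℝ) (hlam : 0 < lam)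
    (k : ℕ) (hk1 : 1 ≤ k) (hkK : k ≤ Kfun n m q lam) :
    (sighat2 Y P lam k ≤ sighat2 Y P lam (k - 1) ↔
      ∀ l ≤ k - 1, sighat2 Y P lam k ≤ sighat2 Y P lam l) ∧
    (sighat2 Y P lam (k - 1) ≤ sighat2 Y P lam k ↔
      ∀ l, k - 1 < l → l ≤ Kfun n m q lam →
        sighat2 Y P lam (k - 1) ≤ sighat2 Y P lam l) := by
  set K := Kfun n m q lam with hK
  set N : ℝ := ((n * m : ℕ) : ℝ) with hN
  set c : ℝ := frob2 (Y - P * Y) with hc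
  set t : ℕ → ℝ := tailSum (P * Y) with ht
  have hs : ∀ l : ℕ, sighat2 Y P lam l = (c + t l) / (N - lam * l) := by
    intro l
    unfold sighat2
    rw [F_eq hP2 hPt Y l]
  have hKm : K ≤ m := min_le_right _ _
  have hKfl : K ≤ Nat.floor ((N - 1) / lam) := le_trans (min_le_left _ _) (min_le_left _ _)
  have hm1 : 1 ≤ m := le_trans hk1 (le_trans hkK hKm)
  have hflpos : 1 ≤ Nat.floor ((N - 1) / lam) := le_trans hk1 (le_trans hkK hKfl)
  have hnonneg : (0:ℝ) ≤ (N - 1) / lam := by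
    by_contra h
    push_neg at h
    have : Nat.floor ((N - 1) / lam) = 0 := Nat.floor_of_nonpos h.le
    omega
  have hfl : lam * (Nat.floor ((N - 1) / lam) : ℝ) ≤ N - 1 := by
    have h1 : (Nat.floor ((N - 1) / lam) : ℝ) ≤ (N - 1) / lam := Nat.floor_le hnonneg
    calc lam * (Nat.floor ((N - 1) / lam) : ℝ) ≤ lam * ((N - 1) / lam) :=
          mul_le_mul_of_nonneg_left h1 hlam.le
      _ = N - 1 := by field_simp
  have hg : ∀ l : ℕ, l ≤ K → 0 < N - lam * l := by
    intro l hl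
    have h1 : (l : ℝ) ≤ (Nat.floor ((N - 1) / lam) : ℝ) := by
      exact_mod_cast le_trans hl hKfl
    have h2 : lam * (l:ℝ) ≤ lam * (Nat.floor ((N - 1) / lam) : ℝ) :=
      mul_le_mul_of_nonneg_left h1 hlam.le
    linarith
  have hDel : ∀ l : ℕ, 1 ≤ l → l ≤ m → ∃ h : m - l < m,
      t (l - 1) = evAsc (P * Y) ⟨m - l, h⟩ + t l := by
    intro l h1 h2
    exact ⟨by omega, tailSum_sub' (P * Y) l h1 h2 (by omega)⟩
  have hcast : ((k - 1 : ℕ) : ℝ) = (k : ℝ) - 1 := by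
    rw [Nat.cast_sub hk1, Nat.cast_one]
  have hgk := hg k hkK
  have hgk1 := hg (k - 1) (le_trans (Nat.sub_le k 1) hkK)
  have hgk1' : 0 < (N - lam * (k:ℝ)) + lam := by
    rw [hcast] at hgk1; linarith
  obtain ⟨hmk, ek⟩ := hDel k hk1 (le_trans hkK hKm)
  set D : ℝ := evAsc (P * Y) ⟨m - k, hmk⟩ with hD
  have hgsub : N - lam * ((k - 1 : ℕ):ℝ) = (N - lam * (k:ℝ)) + lam := by
    rw [hcast]; ring
  constructor
  · constructor
    · intro H l hl
      have H2 := H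
      rw [hs, hs, div_le_div_iff₀ hgk hgk1] at H2
      rw [hgsub] at H2
      have key : lam * (c + t k) ≤ D * (N - lam * (k:ℝ)) := key_down _ _ _ _ _ _ H2 ek
      have main : ∀ j : ℕ, j ≤ k - 1 →
          sighat2 Y P lam k ≤ sighat2 Y P lam (k - 1 - j) := by
        intro j
        induction j with
        | zero => intro _; exact H
        | succ j ih =>
          intro hj
          have hj' : j ≤ k - 1 := by omega
          have prev := ih hj'
          set l' := k - 1 - j with hl'
          have hl'1 : 1 ≤ l' := by omega
          have hl'K : l' ≤ K := by omega
          have hstep : k - 1 - (j + 1) = l' - 1 := by omega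
          rw [hstep]
          have hgl' := hg l' hl'K
          have hgl'1 := hg (l' - 1) (le_trans (Nat.sub_le l' 1) hl'K)
          rw [hs, hs, div_le_div_iff₀ hgk hgl'1]
          rw [hs, hs, div_le_div_iff₀ hgk hgl'] at prev
          obtain ⟨hml', el'⟩ := hDel l' hl'1 (by omega)
          have hmono : D * (N - lam * (k:ℝ)) ≤ evAsc (P * Y) ⟨m - l', hml'⟩ * (N - lam * (k:ℝ)) := by
            have := evAsc_monotone (P * Y) (show (⟨m - k, hmk⟩ : Fin m) ≤ ⟨m - l', hml'⟩ by
              rw [Fin.le_def]; simp; omega)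
            exact mul_le_mul_of_nonneg_right this hgk.le
          have hgsub' : N - lam * ((l' - 1 : ℕ):ℝ) = (N - lam * (l':ℝ)) + lam := by
            rw [Nat.cast_sub hl'1, Nat.cast_one]; ring
          rw [hgsub']
          exact step_down c (t k) (t l') (t (l' - 1)) _ _ lam D _ prev key hmono el'
      have := main (k - 1 - l) (by omega)
      rwa [show k - 1 - (k - 1 - l) = l from by omega] at this
    · intro H
      exact H (k - 1) le_rfl
  · constructor
    · intro H l hkl hlK
      have H2 := H
      rw [hs, hs, div_le_div_iff₀ hgk1 hgk] at H2
      rw [hgsub] at H2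
      have key : D * ((N - lam * (k:ℝ)) + lam) ≤ lam * (c + t (k - 1)) :=
        key_up _ _ _ _ _ _ H2 ek
      rw [← hgsub] at key
      have main : ∀ l : ℕ, k - 1 ≤ l → l ≤ K →
          sighat2 Y P lam (k - 1) ≤ sighat2 Y P lam l := by
        intro l hl
        induction l, hl using Nat.le_induction with
        | base => intro _; exact le_rfl
        | succ l hkl1 ih =>
          intro hlK1
          have hlK : l ≤ K := by omega
          have prev := ih hlK
          have hgl := hg l hlK
          have hgl1 := hg (l + 1) hlK1
          rw [hs, hs, div_le_div_iff₀ hgk1 hgl1]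
          rw [hs, hs, div_le_div_iff₀ hgk1 hgl] at prev
          obtain ⟨hml1, el1⟩ := hDel (l + 1) (by omega) (by omega)
          rw [show l + 1 - 1 = l from rfl] at el1
          have hmono : evAsc (P * Y) ⟨m - (l + 1), hml1⟩ * (N - lam * ((k-1:ℕ):ℝ))
              ≤ D * (N - lam * ((k-1:ℕ):ℝ)) := by
            have := evAsc_monotone (P * Y)
              (show (⟨m - (l + 1), hml1⟩ : Fin m) ≤ ⟨m - k, hmk⟩ by
                rw [Fin.le_def]; simp; omega)
            exact mul_le_mul_of_nonneg_right this hgk1.le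
          have hkey' : evAsc (P * Y) ⟨m - (l + 1), hml1⟩ * (N - lam * ((k-1:ℕ):ℝ))
              ≤ lam * (c + t (k - 1)) := le_trans hmono key
          have hgsub1 : N - lam * ((l + 1 : ℕ):ℝ) = (N - lam * (l:ℝ)) - lam := by
            push_cast; ring
          rw [hgsub1]
          exact step_up c (t (k-1)) (t l) (t (l+1)) _ _ lam _ prev hkey' el1
      exact main l (by omega) hlK
    · intro H
      exact H k (by omega) hkK

end
end

section
/- Fix λ > 0 and define k̂ := Σ_{k=1}^{K_λ} 1{d_k²(PY) ≥ λ σ̂_k²}. Then (a) k̂ = max{0 ≤ k ≤ K_λ : d_j²(PY) ≥ λ σ̂_j² for all 1 ≤ j ≤ k} (with the maximum of the empty set equal to 0); (b) k̂ minimizes σ̂_k² over {0, 1, …, K_λ}; and (c) the map k ↦ σ̂_k² is nonincreasing on {0, …, k̂} and nondecreasing on {k̂, …, K_λ}. -/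
open scoped BigOperators NNReal ENNReal
open Classical MeasureTheory ProbabilityTheory

noncomputable section

open scoped Matrix

namespace EY
variable {n m t : ℕ}

/-- The sorted (increasing) eigenvalues of `Mᴴ * M`. -/
def ev (M : Matrix (Fin n) (Fin m) ℝ) : Fin m → ℝ := fun i =>
  (show (M.transpose * M).IsHermitian by
      simpa [Matrix.conjTranspose_eq_transpose_of_trivial] using Matrix.isHermitian_conjTranspose_mul_self M).eigenvalues
    (Tuple.sort (show (M.transpose * M).IsHermitian by
      simpa [Matrix.conjTranspose_eq_transpose_of_trivial] using Matrix.isHermitian_conjTranspose_mul_self M).eigenvalues i)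

/-- Sum of the `m - k` smallest eigenvalues of `Mᴴ * M`. -/
def G (M : Matrix (Fin n) (Fin m) ℝ) (k : ℕ) : ℝ :=
  ∑ i : Fin m, if (i : ℕ) < m - k then ev M i else 0

lemma ev_nonneg (M : Matrix (Fin n) (Fin m) ℝ) (i : Fin m) : 0 ≤ ev M i :=
  (Matrix.posSemidef_conjTranspose_mul_self M).eigenvalues_nonneg _

lemma ev_mono (M : Matrix (Fin n) (Fin m) ℝ) : Monotone (ev M) :=
  Tuple.monotone_sort _

lemma sval_sq (M : Matrix (Fin n) (Fin m) ℝ) (k : ℕ) (h1 : 1 ≤ k) (h2 : k ≤ m)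
    (h3 : m - k < m) : sval M k ^ 2 = ev M ⟨m - k, h3⟩ := by
  unfold sval
  rw [dif_pos ⟨h1, h2⟩]
  exact Real.sq_sqrt (ev_nonneg M _)

lemma frob2_eq_trace (A : Matrix (Fin n) (Fin m) ℝ) : frob2 A = (Aᴴ * A).trace := by
  simp only [frob2, Matrix.trace, Matrix.diag, Matrix.mul_apply, Matrix.conjTranspose_apply,
    star_trivial, sq]
  exact Finset.sum_comm

lemma frob2_nonneg (A : Matrix (Fin n) (Fin m) ℝ) : 0 ≤ frob2 A := by
  apply Finset.sum_nonneg; intro i _; apply Finset.sum_nonneg; intro j _; positivity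

lemma frob2_eq_zero {A : Matrix (Fin n) (Fin m) ℝ} (h : frob2 A ≤ 0) : A = 0 := by
  ext i j
  have h2 : ∀ i ∈ Finset.univ, (0:ℝ) ≤ ∑ j, (A i j)^2 := by
    intro i _; apply Finset.sum_nonneg; intro j _; positivity
  have h3 := (Finset.sum_eq_zero_iff_of_nonneg h2).mp (le_antisymm h (frob2_nonneg A))
  have h4 := (Finset.sum_eq_zero_iff_of_nonneg (by intro j _; positivity)).mp
    (h3 i (Finset.mem_univ i)) j (Finset.mem_univ j)
  simpa using pow_eq_zero_iff (n := 2) (by norm_num) |>.mp h4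

lemma frob2_add_of_orth {U V : Matrix (Fin n) (Fin m) ℝ} (h : (Uᴴ * V).trace = 0) :
    frob2 (U + V) = frob2 U + frob2 V := by
  rw [frob2_eq_trace, frob2_eq_trace, frob2_eq_trace]
  have hVU : (Vᴴ * U).trace = (Uᴴ * V).trace := by
    rw [← Matrix.trace_transpose (Vᴴ * U)]
    congr 1
    ext i j
    simp [Matrix.mul_apply, Matrix.conjTranspose_apply, Matrix.transpose_apply, mul_comm]
  rw [Matrix.conjTranspose_add, Matrix.add_mul, Matrix.mul_add, Matrix.mul_add,
    Matrix.trace_add, Matrix.trace_add, Matrix.trace_add, h, hVU, h]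
  ring

lemma trace_nonneg_of_psd {S : Matrix (Fin m) (Fin m) ℝ} (hS : S.PosSemidef) :
    0 ≤ S.trace := by
  open scoped MatrixOrder Matrix.Norms.L2Operator in
  obtain ⟨B, hB⟩ := (CStarAlgebra.nonneg_iff_eq_star_mul_self.mp hS.nonneg)
  rw [Matrix.star_eq_conjTranspose] at hB; subst hB
  rw [← frob2_eq_trace]
  exact frob2_nonneg B

lemma trace_mul_nonneg {S T : Matrix (Fin m) (Fin m) ℝ} (hS : S.PosSemidef)
    (hT : T.PosSemidef) : 0 ≤ (S * T).trace := by
  open scoped MatrixOrder Matrix.Norms.L2Operator in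
  obtain ⟨B, hB⟩ := (CStarAlgebra.nonneg_iff_eq_star_mul_self.mp hT.nonneg)
  rw [Matrix.star_eq_conjTranspose] at hB; subst hB
  have : (S * (Bᴴ * B)).trace = (B * S * Bᴴ).trace := by
    rw [← Matrix.mul_assoc, Matrix.trace_mul_comm, Matrix.mul_assoc]
  rw [this]
  exact trace_nonneg_of_psd (hS.mul_mul_conjTranspose_same B)

lemma frob2_mul_isometry (A : Matrix (Fin n) (Fin m) ℝ) (W : Matrix (Fin m) (Fin t) ℝ)
    (hW : Wᴴ * W = 1) : frob2 (A * W) ≤ frob2 A := by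
  have hQ : (1 - W * Wᴴ) = (1 - W * Wᴴ)ᴴ * (1 - W * Wᴴ) := by
    rw [Matrix.conjTranspose_sub, Matrix.conjTranspose_one, Matrix.conjTranspose_mul,
      Matrix.conjTranspose_conjTranspose]
    rw [Matrix.sub_mul, Matrix.mul_sub, Matrix.mul_sub]
    rw [Matrix.mul_assoc W Wᴴ (W * Wᴴ), ← Matrix.mul_assoc Wᴴ W Wᴴ, hW, Matrix.one_mul]
    simp
  have hQpsd : (1 - W * Wᴴ).PosSemidef := by
    rw [hQ]; exact Matrix.posSemidef_conjTranspose_mul_self _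
  have key : 0 ≤ ((Aᴴ * A) * (1 - W * Wᴴ)).trace :=
    trace_mul_nonneg (Matrix.posSemidef_conjTranspose_mul_self A) hQpsd
  have expand : ((Aᴴ * A) * (1 - W * Wᴴ)).trace
      = (Aᴴ * A).trace - ((A * W)ᴴ * (A * W)).trace := by
    rw [Matrix.mul_sub, Matrix.mul_one, Matrix.trace_sub]
    congr 1
    rw [Matrix.conjTranspose_mul, ← Matrix.mul_assoc (Aᴴ * A) W Wᴴ, Matrix.trace_mul_comm]
    simp only [Matrix.mul_assoc]
  rw [frob2_eq_trace, frob2_eq_trace]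
  rw [expand] at key
  linarith

lemma bathtub (ν s : Fin m → ℝ) (hν : Monotone ν) (hν0 : ∀ i, 0 ≤ ν i)
    (hs0 : ∀ i, 0 ≤ s i) (hs1 : ∀ i, s i ≤ 1) (t : ℕ) (hsum : ∑ i, s i = t) :
    ∑ i : Fin m, (if (i : ℕ) < t then ν i else 0) ≤ ∑ i, ν i * s i := by
  rcases Nat.eq_zero_or_pos t with ht | ht
  · subst ht
    simp only [Nat.not_lt_zero, if_false, Finset.sum_const_zero]
    exact Finset.sum_nonneg fun i _ => mul_nonneg (hν0 i) (hs0 i)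
  · have htm : t ≤ m := by
      by_contra h
      push_neg at h
      have h2 : (∑ i, s i) ≤ ∑ _i : Fin m, (1:ℝ) := Finset.sum_le_sum fun i _ => hs1 i
      simp only [Finset.sum_const, Finset.card_univ, Fintype.card_fin, nsmul_eq_mul,
        mul_one] at h2
      rw [hsum] at h2
      exact absurd (Nat.cast_le.mp h2) (by omega)
    set χ : Fin m → ℝ := fun i => if (i : ℕ) < t then 1 else 0 with hχdef
    have hχsum : ∑ i, χ i = t := by
      rw [hχdef, Fin.sum_univ_eq_sum_range (fun i => if i < t then (1:ℝ) else 0) m]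
      rw [Finset.sum_ite, Finset.sum_const, Finset.sum_const]
      have hf : (Finset.range m).filter (fun i => i < t) = Finset.range t := by
        ext x; simp only [Finset.mem_filter, Finset.mem_range]; omega
      simp [hf]
    set θ : ℝ := ν ⟨t - 1, by omega⟩ with hθdef
    have h1 : ∀ i ∈ Finset.univ, χ i * ν i ≤ ν i * s i - θ * s i + θ * χ i := by
      intro i _
      by_cases hi : (i : ℕ) < t
      · have hle : ν i ≤ θ := hν (by simp [Fin.le_def]; omega)
        have := mul_nonneg (sub_nonneg.mpr hle) (sub_nonneg.mpr (hs1 i))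
        simp only [hχdef, if_pos hi]
        nlinarith
      · have hge : θ ≤ ν i := hν (by simp [Fin.le_def]; omega)
        have := mul_nonneg (sub_nonneg.mpr hge) (hs0 i)
        simp only [hχdef, if_neg hi]
        nlinarith
    have h2 : ∑ i : Fin m, (if (i : ℕ) < t then ν i else 0) = ∑ i, χ i * ν i := by
      apply Finset.sum_congr rfl
      intro i _
      by_cases hi : (i : ℕ) < t <;> simp [hχdef, hi]
    rw [h2]
    calc ∑ i, χ i * ν i ≤ ∑ i, (ν i * s i - θ * s i + θ * χ i) := Finset.sum_le_sum h1
      _ = ∑ i, ν i * s i - θ * (∑ i, s i) + θ * (∑ i, χ i) := by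
          rw [Finset.sum_add_distrib, Finset.sum_sub_distrib, Finset.mul_sum, Finset.mul_sum]
      _ = ∑ i, ν i * s i := by rw [hsum, hχsum]; ring

lemma key_lower (M : Matrix (Fin n) (Fin m) ℝ) {t : ℕ} (W : Matrix (Fin m) (Fin t) ℝ)
    (hW : Wᴴ * W = 1) :
    ∑ i : Fin m, (if (i : ℕ) < t then ev M i else 0) ≤ (Wᴴ * (Mᴴ * M) * W).trace := by
  set hH := (show (M.transpose * M).IsHermitian by
      simpa [Matrix.conjTranspose_eq_transpose_of_trivial] using Matrix.isHermitian_conjTranspose_mul_self M) with hHdef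
  set μ : Fin m → ℝ := hH.eigenvalues with hμdef
  set V : Matrix (Fin m) (Fin m) ℝ := (hH.eigenvectorUnitary : Matrix (Fin m) (Fin m) ℝ)
    with hVdef
  have hV1 : star V * V = 1 := Matrix.UnitaryGroup.star_mul_self _
  have hV2 : V * star V = 1 := Matrix.mem_unitaryGroup_iff.mp hH.eigenvectorUnitary.2
  have hspec : Mᴴ * M = V * Matrix.diagonal μ * star V := by
    have := hH.spectral_theorem
    rwa [Unitary.conjStarAlgAut_apply, RCLike.ofReal_real_eq_id, Function.id_comp] at this
  set W' : Matrix (Fin m) (Fin t) ℝ := star V * W with hW'def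
  have hstarV : (star V)ᴴ = V := by
    rw [Matrix.star_eq_conjTranspose, Matrix.conjTranspose_conjTranspose]
  have h1 : W'ᴴ * W' = 1 := by
    rw [hW'def, Matrix.conjTranspose_mul, hstarV, Matrix.mul_assoc,
      ← Matrix.mul_assoc V (star V) W, hV2, Matrix.one_mul, hW]
  set r : Fin m → ℝ := fun j => ∑ l, (W' j l) ^ 2 with hrdef
  have h2 : (Wᴴ * (Mᴴ * M) * W).trace = ∑ j, μ j * r j := by
    rw [hspec]
    have : Wᴴ * (V * Matrix.diagonal μ * star V) * W = W'ᴴ * (Matrix.diagonal μ * W') := by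
      rw [hW'def, Matrix.conjTranspose_mul, hstarV]
      simp only [Matrix.mul_assoc]
    rw [this]
    simp only [Matrix.trace, Matrix.diag, Matrix.mul_apply, Matrix.conjTranspose_apply,
      star_trivial, Matrix.diagonal_mul]
    rw [Finset.sum_comm]
    apply Finset.sum_congr rfl
    intro j _
    rw [hrdef, Finset.mul_sum]
    apply Finset.sum_congr rfl
    intro l _
    have : (∑ x, Matrix.diagonal μ j x * W' x l) = μ j * W' j l := by
      simp [Matrix.diagonal_apply, ite_mul, Finset.sum_ite_eq]
    rw [this]; ring
  have h3 : ∑ j, r j = t := by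
    have : ∑ j, r j = frob2 W' := rfl
    rw [this, frob2_eq_trace, h1, Matrix.trace_one]
    simp
  have hr0 : ∀ j, 0 ≤ r j := fun j => Finset.sum_nonneg fun l _ => sq_nonneg _
  have hr1 : ∀ j, r j ≤ 1 := by
    intro j
    set Q : Matrix (Fin m) (Fin m) ℝ := W' * W'ᴴ with hQdef
    have hQQ : Q * Q = Q := by
      rw [hQdef, Matrix.mul_assoc, ← Matrix.mul_assoc W'ᴴ W' W'ᴴ, h1, Matrix.one_mul]
    have hQsym : ∀ a b, Q a b = Q b a := by
      intro a b
      simp [hQdef, Matrix.mul_apply, Matrix.conjTranspose_apply, mul_comm]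
    have hrQ : r j = Q j j := by
      simp [hrdef, hQdef, Matrix.mul_apply, Matrix.conjTranspose_apply, sq]
    have hdiag : Q j j = ∑ l, (Q j l) ^ 2 := by
      conv_lhs => rw [← hQQ]
      simp only [Matrix.mul_apply]
      apply Finset.sum_congr rfl
      intro l _
      rw [hQsym l j]; ring
    have hsq : (Q j j) ^ 2 ≤ Q j j := by
      conv_rhs => rw [hdiag]
      exact Finset.single_le_sum (fun l _ => sq_nonneg (Q j l)) (Finset.mem_univ j)
    nlinarith [hrQ, hsq]
  set σ := Tuple.sort μ with hσdef
  have hb := bathtub (ev M) (fun i => r (σ i)) (ev_mono M) (ev_nonneg M)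
    (fun i => hr0 _) (fun i => hr1 _) t (by rw [Equiv.sum_comp σ r, h3])
  calc ∑ i : Fin m, (if (i : ℕ) < t then ev M i else 0)
      ≤ ∑ i, ev M i * r (σ i) := hb
    _ = ∑ j, μ j * r j := Equiv.sum_comp σ (fun j => μ j * r j)
    _ = (Wᴴ * (Mᴴ * M) * W).trace := h2.symm

lemma exists_best (M : Matrix (Fin n) (Fin m) ℝ) (k : ℕ) :
    ∃ B : Matrix (Fin n) (Fin m) ℝ, B.rank ≤ k ∧ frob2 (M - B) = G M k := by
  set hH := (show (M.transpose * M).IsHermitian by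
      simpa [Matrix.conjTranspose_eq_transpose_of_trivial] using Matrix.isHermitian_conjTranspose_mul_self M) with hHdef
  set μ : Fin m → ℝ := hH.eigenvalues with hμdef
  set σ := Tuple.sort μ with hσdef
  set V : Matrix (Fin m) (Fin m) ℝ := (hH.eigenvectorUnitary : Matrix (Fin m) (Fin m) ℝ)
    with hVdef
  have hV1 : star V * V = 1 := Matrix.UnitaryGroup.star_mul_self _
  have hV2 : V * star V = 1 := Matrix.mem_unitaryGroup_iff.mp hH.eigenvectorUnitary.2
  have hspec : Mᴴ * M = V * Matrix.diagonal μ * star V := by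
    have := hH.spectral_theorem
    rwa [Unitary.conjStarAlgAut_apply, RCLike.ofReal_real_eq_id, Function.id_comp] at this
  set e : Fin m → ℝ := fun j => if m - k ≤ ((σ.symm j : Fin m) : ℕ) then 1 else 0 with hedef
  have he : ∀ j, e j ≠ 0 → m - k ≤ ((σ.symm j : Fin m) : ℕ) := by
    intro j hj
    by_contra hcon
    apply hj
    simp only [hedef]
    rw [if_neg hcon]
  refine ⟨M * (V * Matrix.diagonal e * star V), ?_, ?_⟩
  · -- rank bound
    rcases le_or_gt m k with hmk | hmk
    · calc (M * (V * Matrix.diagonal e * star V)).rank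
          ≤ m := Matrix.rank_le_card_width _ |>.trans (by simp)
        _ ≤ k := hmk
    · have h1 : (M * (V * Matrix.diagonal e * star V)).rank ≤ (Matrix.diagonal e).rank := by
        calc (M * (V * Matrix.diagonal e * star V)).rank
            ≤ (V * Matrix.diagonal e * star V).rank := Matrix.rank_mul_le_right _ _
          _ ≤ (V * Matrix.diagonal e).rank := Matrix.rank_mul_le_left _ _
          _ ≤ (Matrix.diagonal e).rank := Matrix.rank_mul_le_right _ _
      have h2 : (Matrix.diagonal e).rank = Fintype.card {j // e j ≠ 0} :=
        Matrix.rank_diagonal e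
      have h3 : Fintype.card {j // e j ≠ 0} ≤ k := by
        have hinj : Function.Injective
            (fun x : {j // e j ≠ 0} => (⟨((σ.symm x.1 : Fin m) : ℕ) - (m - k), by
              have hx := he x.1 x.2
              have h5 : ((σ.symm x.1 : Fin m) : ℕ) < m := (σ.symm x.1).2
              omega⟩ : Fin k)) := by
          intro a b hab
          simp only [Fin.mk.injEq] at hab
          have ha' := he a.1 a.2
          have hb' := he b.1 b.2
          have : ((σ.symm a.1 : Fin m) : ℕ) = ((σ.symm b.1 : Fin m) : ℕ) := by omega
          have h6 : σ.symm a.1 = σ.symm b.1 := Fin.ext this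
          exact Subtype.ext (σ.symm.injective h6)
        calc Fintype.card {j // e j ≠ 0} ≤ Fintype.card (Fin k) :=
              Fintype.card_le_of_injective _ hinj
          _ = k := Fintype.card_fin k
      omega
  · -- value
    have hfactor : M - M * (V * Matrix.diagonal e * star V)
        = M * (V * Matrix.diagonal (fun j => 1 - e j) * star V) := by
      have : Matrix.diagonal (fun j => 1 - e j) = 1 - Matrix.diagonal e := by
        rw [← Matrix.diagonal_one, ← Matrix.diagonal_sub]
      rw [this]
      rw [show V * (1 - Matrix.diagonal e) * star V = 1 - V * Matrix.diagonal e * star V from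
        by rw [Matrix.mul_sub, Matrix.mul_one, Matrix.sub_mul, hV2]]
      rw [Matrix.mul_sub, Matrix.mul_one]
    rw [hfactor, frob2_eq_trace]
    have hstarV : (star V)ᴴ = V := by
      rw [Matrix.star_eq_conjTranspose, Matrix.conjTranspose_conjTranspose]
    set D1 : Matrix (Fin m) (Fin m) ℝ := Matrix.diagonal (fun j => 1 - e j) with hD1def
    have hD1H : D1ᴴ = D1 := by
      rw [hD1def, Matrix.diagonal_conjTranspose]
      simp
    have hcancel : ∀ X : Matrix (Fin m) (Fin m) ℝ, star V * (V * X) = X := by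
      intro X; rw [← Matrix.mul_assoc, hV1, Matrix.one_mul]
    set T : Matrix (Fin n) (Fin m) ℝ := M * (V * D1 * star V) with hTdef
    have hspec' : ∀ X : Matrix (Fin m) (Fin m) ℝ,
        Mᴴ * (M * X) = V * (Matrix.diagonal μ * (star V * X)) := by
      intro X
      rw [← Matrix.mul_assoc Mᴴ M X, hspec]
      simp only [Matrix.mul_assoc]
    have hexp : Tᴴ * T = V * (D1 * Matrix.diagonal μ * D1) * star V := by
      rw [hTdef, Matrix.conjTranspose_mul, Matrix.conjTranspose_mul, Matrix.conjTranspose_mul,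
        hstarV, hD1H, ← Matrix.star_eq_conjTranspose V]
      simp only [Matrix.mul_assoc]
      rw [hspec', hcancel, hcancel]
    rw [hexp]
    have htr : (V * (D1 * Matrix.diagonal μ * D1) * star V).trace
        = (D1 * Matrix.diagonal μ * D1).trace := by
      rw [Matrix.trace_mul_comm, hcancel]
    rw [htr, hD1def, Matrix.diagonal_mul_diagonal, Matrix.diagonal_mul_diagonal,
      Matrix.trace_diagonal]
    have hterm : ∀ j : Fin m, (1 - e j) * μ j * (1 - e j)
        = (fun j => if ((σ.symm j : Fin m) : ℕ) < m - k then μ j else 0) j := by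
      intro j
      simp only [hedef]
      by_cases hj : m - k ≤ ((σ.symm j : Fin m) : ℕ)
      · rw [if_pos hj, if_neg (Nat.not_lt.mpr hj)]; ring
      · rw [if_neg hj, if_pos (Nat.lt_of_not_le hj)]; ring
    rw [Finset.sum_congr rfl (fun j _ => hterm j)]
    rw [← Equiv.sum_comp σ (fun j => if ((σ.symm j : Fin m) : ℕ) < m - k then μ j else 0)]
    apply Finset.sum_congr rfl
    intro i _
    simp only [Equiv.symm_apply_apply]
    rfl

lemma lower_bound (M C : Matrix (Fin n) (Fin m) ℝ) (k : ℕ) (hC : C.rank ≤ k) :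
    G M k ≤ frob2 (M - C) := by
  rcases le_or_gt m k with hmk | hmk
  · have : G M k = 0 := by
      unfold G
      rw [Finset.sum_eq_zero]
      intro i _
      rw [if_neg (by omega)]
    rw [this]
    exact frob2_nonneg _
  · set t := m - k with htdef
    set Lker : Submodule ℝ (Fin m → ℝ) := LinearMap.ker C.mulVecLin with hLdef
    set eL := WithLp.linearEquiv 2 ℝ (Fin m → ℝ) with heLdef
    set K : Submodule ℝ (EuclideanSpace ℝ (Fin m)) := Lker.comap eL.toLinearMap with hKdef
    have hfinK : Module.finrank ℝ K = Module.finrank ℝ Lker := by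
      rw [hKdef, Submodule.comap_equiv_eq_map_symm]
      exact LinearEquiv.finrank_map_eq _ _
    have hrn := LinearMap.finrank_range_add_finrank_ker C.mulVecLin
    rw [Module.finrank_fintype_fun_eq_card, Fintype.card_fin] at hrn
    rw [← hLdef] at hrn
    have hrank : C.rank = Module.finrank ℝ (LinearMap.range C.mulVecLin) := rfl
    have hfin : t ≤ Module.finrank ℝ K := by
      rw [hfinK]
      omega
    set b := stdOrthonormalBasis ℝ K with hbdef
    set w : Fin t → EuclideanSpace ℝ (Fin m) :=
      fun j => ((b (Fin.castLE hfin j)) : EuclideanSpace ℝ (Fin m)) with hwdef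
    set W : Matrix (Fin m) (Fin t) ℝ := fun i j => w j i with hWdef
    have hinner : ∀ j l : Fin t, (∑ i, w j i * w l i) = if j = l then (1:ℝ) else 0 := by
      intro j l
      have h0 := orthonormal_iff_ite.mp b.orthonormal (Fin.castLE hfin j) (Fin.castLE hfin l)
      rw [Submodule.coe_inner] at h0
      rw [PiLp.inner_apply] at h0
      simp only [RCLike.inner_apply, conj_trivial] at h0
      simp only [hwdef]
      rw [Finset.sum_congr rfl (fun x _ => mul_comm _ _), h0]
      by_cases hjl : j = l
      · simp [hjl]
      · rw [if_neg hjl, if_neg (fun hc => hjl (Fin.castLE_injective hfin hc))]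
    have hWW : Wᴴ * W = 1 := by
      ext j l
      rw [Matrix.mul_apply, Matrix.one_apply]
      simp only [Matrix.conjTranspose_apply, star_trivial, hWdef]
      exact hinner j l
    have hker : ∀ j : Fin t, C.mulVec (w j) = 0 := by
      intro j
      have hmem := (b (Fin.castLE hfin j)).2
      have hmem2 : C.mulVecLin (eL ((b (Fin.castLE hfin j)) : EuclideanSpace ℝ (Fin m))) = 0 :=
        LinearMap.mem_ker.mp (Submodule.mem_comap.mp hmem)
      exact hmem2
    have hCW : C * W = 0 := by
      ext i j
      have := congrFun (hker j) i
      rw [Matrix.mulVec, dotProduct] at this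
      rw [Matrix.mul_apply]
      simpa [hWdef] using this
    have hMCW : (M - C) * W = M * W := by
      rw [Matrix.sub_mul, hCW, sub_zero]
    have h1 : frob2 (M * W) ≤ frob2 (M - C) := by
      rw [← hMCW]
      exact frob2_mul_isometry _ W hWW
    have h2 : frob2 (M * W) = (Wᴴ * (Mᴴ * M) * W).trace := by
      rw [frob2_eq_trace, Matrix.conjTranspose_mul]
      simp only [Matrix.mul_assoc]
    have h3 := key_lower M W hWW
    rw [← h2] at h3
    calc G M k = ∑ i : Fin m, (if (i : ℕ) < t then ev M i else 0) := rfl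
      _ ≤ frob2 (M * W) := h3
      _ ≤ frob2 (M - C) := h1

lemma G_zero (M : Matrix (Fin n) (Fin m) ℝ) : G M 0 = frob2 M := by
  set hH := (show (M.transpose * M).IsHermitian by
      simpa [Matrix.conjTranspose_eq_transpose_of_trivial] using Matrix.isHermitian_conjTranspose_mul_self M) with hHdef
  set μ : Fin m → ℝ := hH.eigenvalues with hμdef
  set V : Matrix (Fin m) (Fin m) ℝ := (hH.eigenvectorUnitary : Matrix (Fin m) (Fin m) ℝ)
    with hVdef
  have hV1 : star V * V = 1 := Matrix.UnitaryGroup.star_mul_self _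
  have hspec : Mᴴ * M = V * Matrix.diagonal μ * star V := by
    have := hH.spectral_theorem
    rwa [Unitary.conjStarAlgAut_apply, RCLike.ofReal_real_eq_id, Function.id_comp] at this
  have h1 : G M 0 = ∑ i, ev M i := by
    unfold G
    apply Finset.sum_congr rfl
    intro i _
    rw [if_pos (by omega : (i:ℕ) < m - 0)]
  have h2 : ∑ i, ev M i = ∑ j, μ j := Equiv.sum_comp (Tuple.sort μ) μ
  have h3 : (Mᴴ * M).trace = ∑ j, μ j := by
    rw [hspec, Matrix.trace_mul_comm, ← Matrix.mul_assoc, hV1, Matrix.one_mul,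
      Matrix.trace_diagonal]
  rw [h1, h2, frob2_eq_trace, h3]

lemma G_succ (M : Matrix (Fin n) (Fin m) ℝ) (k : ℕ) (hk : k < m) :
    G M k = G M (k + 1) + sval M (k + 1) ^ 2 := by
  have hlt : m - (k+1) < m := by omega
  set i₀ : Fin m := ⟨m - (k+1), hlt⟩ with hi₀
  have hsplit : ∀ i : Fin m, (if (i : ℕ) < m - k then ev M i else 0)
      = (if (i : ℕ) < m - (k+1) then ev M i else 0) + (if i = i₀ then ev M i else 0) := by
    intro i
    by_cases h1 : (i : ℕ) < m - (k+1)
    · rw [if_pos (by omega), if_pos h1, if_neg (by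
        intro hcon
        rw [hcon] at h1
        simp only [hi₀] at h1
        omega)]
      ring
    · by_cases h2 : i = i₀
      · rw [if_pos (by rw [h2]; simp only [hi₀]; omega), if_neg h1, if_pos h2]
        ring
      · rw [if_neg (by
          intro hcon
          have : (i : ℕ) = m - (k+1) := by omega
          exact h2 (Fin.ext this)), if_neg h1, if_neg h2]
        ring
  unfold G
  rw [Finset.sum_congr rfl (fun i _ => hsplit i), Finset.sum_add_distrib,
    Finset.sum_ite_eq' Finset.univ i₀ (ev M), if_pos (Finset.mem_univ i₀)]
  rw [sval_sq M (k+1) (by omega) (by omega) hlt]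

lemma sval_sq_succ_le (M : Matrix (Fin n) (Fin m) ℝ) (k : ℕ) (h1 : 1 ≤ k) (h2 : k + 1 ≤ m) :
    sval M (k+1) ^ 2 ≤ sval M k ^ 2 := by
  rw [sval_sq M k h1 (by omega) (by omega), sval_sq M (k+1) (by omega) h2 (by omega)]
  exact ev_mono M (by simp [Fin.le_def]; omega)

lemma trunc_spec (M : Matrix (Fin n) (Fin m) ℝ) (k : ℕ) (hk : k ≠ 0) :
    (trunc M k).rank ≤ k ∧
      ∀ C : Matrix (Fin n) (Fin m) ℝ, C.rank ≤ k → frob2 (M - trunc M k) ≤ frob2 (M - C) := by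
  rw [trunc, if_neg hk]
  apply Classical.epsilon_spec (p := fun B : Matrix (Fin n) (Fin m) ℝ =>
    B.rank ≤ k ∧ ∀ C : Matrix (Fin n) (Fin m) ℝ, C.rank ≤ k → frob2 (M - B) ≤ frob2 (M - C))
  obtain ⟨B, hBrank, hBval⟩ := exists_best M k
  exact ⟨B, hBrank, fun C hC => hBval ▸ lower_bound M C k hC⟩

lemma frob2_trunc (M : Matrix (Fin n) (Fin m) ℝ) (k : ℕ) :
    frob2 (M - trunc M k) = G M k := by
  rcases Nat.eq_zero_or_pos k with hk | hk
  · subst hk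
    rw [trunc, if_pos rfl, sub_zero, G_zero]
  · obtain ⟨hrank, hmin⟩ := trunc_spec M k (by omega)
    obtain ⟨B, hBrank, hBval⟩ := exists_best M k
    exact le_antisymm (hBval ▸ hmin B hBrank) (lower_bound M _ k hrank)

variable {P : Matrix (Fin n) (Fin n) ℝ} {Y : Matrix (Fin n) (Fin m) ℝ}

lemma conjT_of_symm (hPt : P.transpose = P) : Pᴴ = P := by
  have : Pᴴ = Pᵀ := by
    ext i j
    simp [Matrix.conjTranspose_apply, Matrix.transpose_apply]
  rw [this, hPt]

lemma cross_zero (hP2 : P * P = P) (hPt : P.transpose = P)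
    (B : Matrix (Fin n) (Fin m) ℝ) (hB : P * B = B) :
    frob2 (Y - B) = frob2 (Y - P * Y) + frob2 (P * Y - B) := by
  have hPH : Pᴴ = P := conjT_of_symm hPt
  have hdecomp : Y - B = (Y - P * Y) + (P * Y - B) := by
    rw [sub_add_sub_cancel]
  rw [hdecomp]
  apply frob2_add_of_orth
  have h1 : P * Y - B = P * (Y - B) := by rw [Matrix.mul_sub, hB]
  have h2 : (Y - P * Y)ᴴ * (P * (Y - B)) = 0 := by
    rw [Matrix.conjTranspose_sub, Matrix.conjTranspose_mul, hPH]
    rw [Matrix.sub_mul, Matrix.mul_assoc Yᴴ P (P * (Y - B)), ← Matrix.mul_assoc P P (Y - B),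
      hP2]
    rw [sub_self]
  rw [h1, h2, Matrix.trace_zero]

lemma trunc_P_fix (hP2 : P * P = P) (hPt : P.transpose = P) (k : ℕ) (hk : k ≠ 0) :
    P * trunc (P * Y) k = trunc (P * Y) k := by
  have hPH : Pᴴ = P := conjT_of_symm hPt
  obtain ⟨hrank, hmin⟩ := trunc_spec (P * Y) k hk
  set B := trunc (P * Y) k with hBdef
  have hdecomp : frob2 (P * Y - B) = frob2 (P * Y - P * B) + frob2 (P * B - B) := by
    have h0 : P * Y - B = (P * Y - P * B) + (P * B - B) := by rw [sub_add_sub_cancel]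
    rw [h0]
    apply frob2_add_of_orth
    have h1 : (P * Y - P * B) = P * (Y - B) := by rw [Matrix.mul_sub]
    have h2 : (P * (Y - B))ᴴ * (P * B - B) = 0 := by
      rw [Matrix.conjTranspose_mul, hPH, Matrix.mul_assoc]
      have h3 : P * (P * B - B) = 0 := by
        rw [Matrix.mul_sub, ← Matrix.mul_assoc, hP2, sub_self]
      rw [h3, Matrix.mul_zero]
    rw [h1, h2, Matrix.trace_zero]
  have hrankPB : (P * B).rank ≤ k := (Matrix.rank_mul_le_right P B).trans hrank
  have hminPB := hmin (P * B) hrankPB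
  have : frob2 (P * B - B) ≤ 0 := by linarith
  have := frob2_eq_zero this
  rw [sub_eq_zero] at this
  exact this

lemma f_eq (hP2 : P * P = P) (hPt : P.transpose = P) (k : ℕ) :
    frob2 (Y - trunc (P * Y) k) = frob2 (Y - P * Y) + G (P * Y) k := by
  rcases Nat.eq_zero_or_pos k with hk | hk
  · subst hk
    rw [trunc, if_pos rfl]
    have := cross_zero (Y := Y) hP2 hPt 0 (Matrix.mul_zero P)
    rw [sub_zero] at this
    rw [sub_zero, this, G_zero, sub_zero]
  · rw [cross_zero hP2 hPt _ (trunc_P_fix hP2 hPt k (by omega)), frob2_trunc]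

end EY

theorem statement_2
    {n m p q : ℕ}
    (X : Matrix (Fin n) (Fin p) ℝ) (A : Matrix (Fin p) (Fin m) ℝ)
    (E Y : Matrix (Fin n) (Fin m) ℝ)
    (P : Matrix (Fin n) (Fin n) ℝ)
    (hY : Y = X * A + E)
    (hP2 : P * P = P) (hPt : P.transpose = P) (hPX : P * X = X)
    (hq : X.rank = q) (hPq : P.rank = q)
    (lam : ℝ) (hlam : 0 < lam)
    :
    khat Y P q lam = sSup {k : ℕ | k ≤ Kfun n m q lam ∧
        ∀ j, 1 ≤ j → j ≤ k → lam * sighat2 Y P lam j ≤ (sval (P * Y) j) ^ 2} ∧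
    (∀ k ≤ Kfun n m q lam, sighat2 Y P lam (khat Y P q lam) ≤ sighat2 Y P lam k) ∧
    (∀ k₁ k₂ : ℕ, k₁ ≤ k₂ → k₂ ≤ khat Y P q lam →
      sighat2 Y P lam k₂ ≤ sighat2 Y P lam k₁) ∧
    (∀ k₁ k₂ : ℕ, khat Y P q lam ≤ k₁ → k₁ ≤ k₂ → k₂ ≤ Kfun n m q lam →
      sighat2 Y P lam k₁ ≤ sighat2 Y P lam k₂) := by
  classical
  set M : Matrix (Fin n) (Fin m) ℝ := P * Y with hMdef
  set K : ℕ := Kfun n m q lam with hKdef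
  set Nr : ℝ := ((n * m : ℕ) : ℝ) with hNrdef
  set S : Set ℕ := {k : ℕ | k ≤ K ∧
      ∀ j, 1 ≤ j → j ≤ k → lam * sighat2 Y P lam j ≤ (sval M j) ^ 2} with hSdef
  set f : ℕ → ℝ := fun k => frob2 (Y - trunc M k) with hfdef
  have hs : ∀ k : ℕ, sighat2 Y P lam k = f k / (Nr - lam * k) := fun k => rfl
  have hKm : K ≤ m := min_le_right _ _
  have hKfloor : K ≤ Nat.floor ((Nr - 1) / lam) :=
    (min_le_left _ _).trans (min_le_left _ _)
  -- membership facts about S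
  have hS0 : 0 ∈ S := ⟨Nat.zero_le _, fun j hj1 hj0 => absurd (hj1.trans hj0) (by omega)⟩
  have hSbdd : BddAbove S := ⟨K, fun x hx => hx.1⟩
  have hSne : S.Nonempty := ⟨0, hS0⟩
  have hNmem : sSup S ∈ S := Nat.sSup_mem hSne hSbdd
  have hNK : sSup S ≤ K := hNmem.1
  have hle_sSup : ∀ x ∈ S, x ≤ sSup S := fun x hx => le_csSup hSbdd hx
  rcases Nat.eq_zero_or_pos K with hK0 | hK1
  · -- trivial case K = 0
    have hkhat0 : khat Y P q lam = 0 := by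
      unfold khat
      rw [← hKdef, hK0]
      rw [show Finset.Icc 1 0 = (∅ : Finset ℕ) from Finset.Icc_eq_empty (by omega)]
      exact Finset.sum_empty
    have hS_eq : S = {0} := by
      ext k
      simp only [hSdef, Set.mem_setOf_eq, Set.mem_singleton_iff]
      constructor
      · rintro ⟨hk, _⟩; omega
      · rintro rfl
        exact ⟨by omega, fun j hj1 hj0 => absurd (hj1.trans hj0) (by omega)⟩
    refine ⟨by rw [hkhat0, hS_eq, csSup_singleton], ?_, ?_, ?_⟩
    · intro k hk
      have hk0 : k = 0 := by omega
      rw [hkhat0, hk0]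
    · intro k1 k2 h12 h2
      rw [hkhat0] at h2
      have : k1 = 0 ∧ k2 = 0 := by omega
      rw [this.1, this.2]
    · intro k1 k2 h1 h12 h2
      have : k1 = k2 := by omega
      rw [this]
  · -- main case 1 ≤ K
    -- positivity of denominators
    have hfl0 : (0:ℝ) ≤ (Nr - 1) / lam := by
      by_contra hcon
      push_neg at hcon
      have : Nat.floor ((Nr - 1) / lam) = 0 := Nat.floor_of_nonpos hcon.le
      omega
    have hlamK : lam * K ≤ Nr - 1 := by
      have h1 : (K : ℝ) ≤ (Nr - 1) / lam :=
        le_trans (Nat.cast_le.mpr hKfloor) (Nat.floor_le hfl0)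
      rw [mul_comm]
      exact (le_div_iff₀ hlam).mp h1
    have hapos : ∀ k : ℕ, k ≤ K → 0 < Nr - lam * k := by
      intro k hk
      have h1 : lam * (k:ℝ) ≤ lam * (K:ℝ) :=
        mul_le_mul_of_nonneg_left (Nat.cast_le.mpr hk) hlam.le
      linarith
    have hf0 : ∀ k, 0 ≤ f k := fun k => EY.frob2_nonneg _
    have hd20 : ∀ k, (0:ℝ) ≤ sval M k ^ 2 := fun k => sq_nonneg _
    have hstep : ∀ k : ℕ, k < m → f k = f (k+1) + sval M (k+1) ^ 2 := by
      intro k hk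
      rw [hfdef]
      simp only
      rw [EY.f_eq hP2 hPt k, EY.f_eq hP2 hPt (k+1), EY.G_succ M k hk]
      ring
    have hprev : ∀ j : ℕ, 1 ≤ j → j ≤ K → f (j-1) = f j + sval M j ^ 2 := by
      intro j h1 h2
      have := hstep (j-1) (by omega)
      rwa [Nat.sub_add_cancel h1] at this
    have hcastsub : ∀ j : ℕ, 1 ≤ j → ((j - 1 : ℕ) : ℝ) = (j:ℝ) - 1 := by
      intro j h1
      push_cast [h1]
      ring
    have hiff1 : ∀ j : ℕ, 1 ≤ j → j ≤ K →
        (lam * sighat2 Y P lam j ≤ sval M j ^ 2 ↔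
          sighat2 Y P lam j ≤ sighat2 Y P lam (j-1)) := by
      intro j h1 hjK
      have hα : 0 < Nr - lam * j := hapos j hjK
      have hαl : Nr - lam * ((j-1 : ℕ):ℝ) = (Nr - lam * j) + lam := by
        rw [hcastsub j h1]; ring
      have hα2 : 0 < (Nr - lam * j) + lam := by linarith
      rw [hs j, hs (j-1), hprev j h1 hjK, hαl]
      rw [← mul_div_assoc, div_le_iff₀ hα, div_le_div_iff₀ hα hα2]
      rw [show f j * ((Nr - lam * ↑j) + lam) = f j * (Nr - lam * ↑j) + lam * f j from by ring,
        show (f j + sval M j ^ 2) * (Nr - lam * ↑j)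
          = f j * (Nr - lam * ↑j) + sval M j ^ 2 * (Nr - lam * ↑j) from by ring]
      constructor
      · intro h; linarith
      · intro h; linarith
    have hiff2 : ∀ j : ℕ, 1 ≤ j → j ≤ K →
        (sval M j ^ 2 < lam * sighat2 Y P lam j ↔
          sighat2 Y P lam (j-1) < sighat2 Y P lam j) := by
      intro j h1 hjK
      have hα : 0 < Nr - lam * j := hapos j hjK
      have hαl : Nr - lam * ((j-1 : ℕ):ℝ) = (Nr - lam * j) + lam := by
        rw [hcastsub j h1]; ring
      have hα2 : 0 < (Nr - lam * j) + lam := by linarith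
      rw [hs j, hs (j-1), hprev j h1 hjK, hαl]
      rw [← mul_div_assoc, lt_div_iff₀ hα, div_lt_div_iff₀ hα2 hα]
      rw [show (f j + sval M j ^ 2) * (Nr - lam * ↑j)
          = f j * (Nr - lam * ↑j) + sval M j ^ 2 * (Nr - lam * ↑j) from by ring,
        show f j * ((Nr - lam * ↑j) + lam) = f j * (Nr - lam * ↑j) + lam * f j from by ring]
      constructor
      · intro h; linarith
      · intro h; linarith
    have hdown : ∀ j : ℕ, 1 ≤ j → j + 1 ≤ K →
        lam * sighat2 Y P lam (j+1) ≤ sval M (j+1) ^ 2 →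
        lam * sighat2 Y P lam j ≤ sval M j ^ 2 := by
      intro j h1 hj1K hcj1
      have hαj : 0 < Nr - lam * j := hapos j (by omega)
      have hαj1 : 0 < Nr - lam * (j+1:ℕ) := hapos (j+1) hj1K
      rw [hs (j+1), ← mul_div_assoc, div_le_iff₀ hαj1] at hcj1
      rw [hs j, ← mul_div_assoc, div_le_iff₀ hαj]
      have hfj : f j = f (j+1) + sval M (j+1) ^ 2 := by
        have := hprev (j+1) (by omega) hj1K
        simpa using this
      have hD : sval M (j+1) ^ 2 ≤ sval M j ^ 2 :=
        EY.sval_sq_succ_le M j h1 (by omega)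
      have hcast1 : ((j+1:ℕ):ℝ) = (j:ℝ) + 1 := by push_cast; ring
      rw [hcast1] at hcj1 hαj1
      have e0 : lam * f j = lam * f (j+1) + lam * sval M (j+1) ^ 2 := by rw [hfj]; ring
      have e1 : sval M (j+1) ^ 2 * (Nr - lam * (↑j + 1)) + lam * sval M (j+1) ^ 2
          = sval M (j+1) ^ 2 * (Nr - lam * ↑j) := by ring
      have e2 : sval M (j+1) ^ 2 * (Nr - lam * ↑j) ≤ sval M j ^ 2 * (Nr - lam * ↑j) :=
        mul_le_mul_of_nonneg_right hD hαj.le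
      linarith
    have hdc : ∀ i j : ℕ, 1 ≤ i → i ≤ j → j ≤ K →
        lam * sighat2 Y P lam j ≤ sval M j ^ 2 →
        lam * sighat2 Y P lam i ≤ sval M i ^ 2 := by
      intro i j h1 hij
      induction j, hij using Nat.le_induction with
      | base => exact fun _ h => h
      | succ j hij ih =>
          exact fun hjK hc => ih (by omega) (hdown j (by omega) hjK hc)
    -- khat = sSup S
    have hkhat : khat Y P q lam = sSup S := by
      have hcard : khat Y P q lam
          = ((Finset.Icc 1 K).filter
              (fun k => lam * sighat2 Y P lam k ≤ sval M k ^ 2)).card := by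
        unfold khat
        rw [← hKdef, ← hMdef, Finset.card_filter]
      have hfilter : (Finset.Icc 1 K).filter
          (fun k => lam * sighat2 Y P lam k ≤ sval M k ^ 2) = Finset.Icc 1 (sSup S) := by
        ext j
        simp only [Finset.mem_filter, Finset.mem_Icc]
        constructor
        · rintro ⟨⟨hj1, hjK⟩, hcj⟩
          exact ⟨hj1, hle_sSup j ⟨hjK, fun i hi1 hij => hdc i j hi1 hij hjK hcj⟩⟩
        · rintro ⟨hj1, hjN⟩
          exact ⟨⟨hj1, hjN.trans hNK⟩, hNmem.2 j hj1 hjN⟩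
      rw [hcard, hfilter, Nat.card_Icc]
      omega
    have hmono_down : ∀ k1 k2 : ℕ, k1 ≤ k2 → k2 ≤ sSup S →
        sighat2 Y P lam k2 ≤ sighat2 Y P lam k1 := by
      intro k1 k2 h12
      induction k2, h12 using Nat.le_induction with
      | base => exact fun _ => le_rfl
      | succ k2 h12 ih =>
          intro hk2
          have hcx := hNmem.2 (k2+1) (by omega) hk2
          have hstep2 := (hiff1 (k2+1) (by omega) (le_trans hk2 hNK)).mp hcx
          simp only [Nat.add_sub_cancel] at hstep2
          exact hstep2.trans (ih (by omega))
    have hmono_up : ∀ k1 k2 : ℕ, sSup S ≤ k1 → k1 ≤ k2 → k2 ≤ K →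
        sighat2 Y P lam k1 ≤ sighat2 Y P lam k2 := by
      intro k1 k2 hN1 h12
      induction k2, h12 using Nat.le_induction with
      | base => exact fun _ => le_rfl
      | succ k2 h12 ih =>
          intro hk2K
          have hnc : ¬ (lam * sighat2 Y P lam (k2+1) ≤ sval M (k2+1) ^ 2) := by
            intro hc
            have hmem : (k2+1) ∈ S :=
              ⟨hk2K, fun i hi1 hij => hdc i (k2+1) hi1 hij hk2K hc⟩
            have := hle_sSup _ hmem
            omega
          have hlt := (hiff2 (k2+1) (by omega) hk2K).mp (lt_of_not_ge hnc)
          simp only [Nat.add_sub_cancel] at hlt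
          exact le_trans (ih (by omega)) hlt.le
    refine ⟨hkhat, ?_, ?_, ?_⟩
    · intro k hk
      rw [hkhat]
      rcases le_total k (sSup S) with h | h
      · exact hmono_down k (sSup S) h le_rfl
      · exact hmono_up (sSup S) k le_rfl h hk
    · intro k1 k2 h12 h2
      rw [hkhat] at h2
      exact hmono_down k1 k2 h12 h2
    · intro k1 k2 h1 h12 h2
      rw [hkhat] at h1
      exact hmono_up k1 k2 h1 h12 h2

end
end
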